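/- Let $X$ be a standard Borel space with a Borel probability measure $\mu$, let $Y$ be a compact metrizable space, and let $p: Y \to X$ be a Borel map such that $\mu(p(Y)) = 1$ and such that $p^{-1}(x)$ is compact for $\mu$-almost all $x \in X$. Suppose $\nu_1, \nu_2, \nu_3, \ldots$ is a sequence of Borel probability measures on $Y$ with $p_*\nu_n = \mu$ for all $n$, converging in the weak* topology to a Borel probability measure $\nu$. Then $p_*\nu = \mu$. -/

import Mathlib

open MeasureTheory Filter Set Topology
open scoped ENNReal NNReal

section Cap
variable {μ : Measure ℝ}

/-- Capacitability: an analytic subset of `ℝ` can be approximated from inside by compact sets,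
in outer measure, for any finite Borel measure. -/
lemma analyticSet_exists_isCompact_lt [IsFiniteMeasure μ] {A : Set ℝ}
    (hA : AnalyticSet A) {c : ℝ≥0∞} (hc : c < μ A) :
    ∃ K, K ⊆ A ∧ IsCompact K ∧ c < μ K := by
  classical
  obtain ⟨c', hcc', hc'A⟩ := exists_between hc
  rw [AnalyticSet_def] at hA
  rcases hA with hA | ⟨f, hf, rfl⟩
  · rw [hA, measure_empty] at hc
    exact absurd hc (by simp)
  -- `D n k` : sequences whose first `k` entries are bounded by `n`
  set D : (ℕ → ℕ) → ℕ → Set (ℕ → ℕ) := fun n k => {α | ∀ i < k, α i ≤ n i} with hD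
  have hDzero : ∀ n, D n 0 = univ := by
    intro n
    ext α
    simp [hD]
  have hDsucc : ∀ (n : ℕ → ℕ) (k m : ℕ),
      D (Function.update n k m) (k + 1) = D n k ∩ {α | α k ≤ m} := by
    intro n k m
    ext α
    simp only [hD, mem_setOf_eq, mem_inter_iff]
    constructor
    · intro h
      refine ⟨fun i hi => ?_, ?_⟩
      · have := h i (Nat.lt_succ_of_lt hi)
        rwa [Function.update_of_ne hi.ne] at this
      · have := h k (Nat.lt_succ_self k)
        rwa [Function.update_self] at this
    · intro ⟨h1, h2⟩ i hi
      rcases Nat.lt_succ_iff_lt_or_eq.1 hi with hik | rfl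
      · rw [Function.update_of_ne hik.ne]
        exact h1 i hik
      · rw [Function.update_self]
        exact h2
  -- one recursion step
  have step : ∀ (n : ℕ → ℕ) (k : ℕ), c' < μ (f '' D n k) →
      ∃ m, c' < μ (f '' D (Function.update n k m) (k + 1)) := by
    intro n k hk
    have hunion : (⋃ m, D n k ∩ {α | α k ≤ m}) = D n k := by
      ext α
      simp only [mem_iUnion, mem_inter_iff, mem_setOf_eq]
      exact ⟨fun ⟨m, h, _⟩ => h, fun h => ⟨α k, h, le_refl _⟩⟩
    have hmono : Monotone fun m => D n k ∩ {α | α k ≤ m} := by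
      intro m m' hmm α hα
      exact ⟨hα.1, le_trans hα.2 hmm⟩
    have hdir : Directed (· ⊆ ·) fun m => f '' (D n k ∩ {α | α k ≤ m}) := by
      intro m m'
      exact ⟨max m m', image_mono (hmono (le_max_left _ _)),
        image_mono (hmono (le_max_right _ _))⟩
    have heq : μ (f '' D n k) = ⨆ m, μ (f '' (D n k ∩ {α | α k ≤ m})) := by
      conv_lhs => rw [← hunion, image_iUnion]
      exact Directed.measure_iUnion hdir
    rw [heq] at hk
    obtain ⟨m, hm⟩ := lt_iSup_iff.1 hk
    exact ⟨m, by rwa [hDsucc]⟩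
  -- the recursively defined bounds
  have base : c' < μ (f '' D (fun _ => 0) 0) := by
    rw [hDzero, image_univ]
    exact hc'A
  let seq : (k : ℕ) → {n : ℕ → ℕ // c' < μ (f '' D n k)} := fun k =>
    Nat.rec ⟨fun _ => 0, base⟩
      (fun k ih => ⟨Function.update ih.1 k (Classical.choose (step ih.1 k ih.2)),
        Classical.choose_spec (step ih.1 k ih.2)⟩) k
  set n : ℕ → ℕ := fun k => (seq (k + 1)).1 k with hn
  have hseq_succ : ∀ k, (seq (k + 1)).1 =
      Function.update (seq k).1 k (Classical.choose (step (seq k).1 k (seq k).2)) := by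
    intro k
    rfl
  have stab : ∀ k i, i < k → (seq k).1 i = n i := by
    intro k
    induction k with
    | zero => intro i hi; exact absurd hi (Nat.not_lt_zero i)
    | succ k ih =>
      intro i hi
      rcases Nat.lt_succ_iff_lt_or_eq.1 hi with hik | rfl
      · rw [hseq_succ k, Function.update_of_ne hik.ne]
        exact ih i hik
      · rfl
  have hDn : ∀ k, D (seq k).1 k = D n k := by
    intro k
    ext α
    simp only [hD, mem_setOf_eq]
    constructor
    · intro h i hi
      rw [← stab k i hi]
      exact h i hi
    · intro h i hi
      rw [stab k i hi]
      exact h i hi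
  have invariant : ∀ k, c' < μ (f '' D n k) := by
    intro k
    have := (seq k).2
    rwa [hDn k] at this
  -- the compact set
  set C : Set (ℕ → ℕ) := univ.pi (fun i => Iic (n i)) with hC
  have hCc : IsCompact C := isCompact_univ_pi fun i => (finite_Iic (n i)).isCompact
  set K : Set ℝ := f '' C with hK
  have hKc : IsCompact K := hCc.image hf
  have hKA : K ⊆ range f := image_subset_range f C
  refine ⟨K, hKA, hKc, lt_of_lt_of_le hcc' ?_⟩
  -- μ K ≥ c'
  by_contra hcon
  push_neg at hcon
  obtain ⟨U, hKU, hUopen, hUlt⟩ := Set.exists_isOpen_lt_of_lt K c' hcon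
  -- find k with f '' (D n k) ⊆ U
  have hexk : ∃ k, f '' (D n k) ⊆ U := by
    by_contra hnk
    push_neg at hnk
    have hα : ∀ k, ∃ α ∈ D n k, f α ∉ U := by
      intro k
      obtain ⟨x, hx, hxU⟩ := not_subset.1 (hnk k)
      obtain ⟨α, hα, rfl⟩ := hx
      exact ⟨α, hα, hxU⟩
    choose α hαD hαU using hα
    -- a compact set containing all the α k
    set M : ℕ → ℕ := fun i => max (n i) ((Finset.range (i + 1)).sup fun k => α k i) with hM
    set T : Set (ℕ → ℕ) := univ.pi (fun i => Iic (M i)) with hT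
    have hTc : IsCompact T := isCompact_univ_pi fun i => (finite_Iic (M i)).isCompact
    have hαT : ∀ k, α k ∈ T := by
      intro k
      intro i _
      simp only [mem_Iic]
      rcases le_or_gt k i with hki | hik
      · exact le_trans (Finset.le_sup (f := fun k' => α k' i)
          (Finset.mem_range.2 (Nat.lt_succ_of_le hki))) (le_max_right _ _)
      · exact le_trans (hαD k i hik) (le_max_left _ _)
    obtain ⟨β, hβT, φ, hφ, hconv⟩ := hTc.tendsto_subseq hαT
    have hβC : β ∈ C := by
      intro i _
      simp only [mem_Iic]
      -- coordinates converge in the discrete space ℕ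
      have hcoord : Tendsto (fun j => α (φ j) i) atTop (𝓝 (β i)) :=
        (continuous_apply i).continuousAt.tendsto.comp hconv
      have heventually : ∀ᶠ j in atTop, α (φ j) i = β i := by
        have : {β i} ∈ 𝓝 (β i) := isOpen_discrete {β i} |>.mem_nhds rfl
        exact (hcoord.eventually_mem this).mono fun j hj => hj
      have hbig : ∀ᶠ j in atTop, i < φ j :=
        hφ.tendsto_atTop.eventually_gt_atTop i
      obtain ⟨j, hj1, hj2⟩ := (heventually.and hbig).exists
      rw [← hj1]
      exact hαD (φ j) i hj2
    have hfβ : f β ∈ U := hKU ⟨β, hβC, rfl⟩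
    have : ∀ᶠ j in atTop, f (α (φ j)) ∈ U :=
      ((hf.tendsto β).comp hconv).eventually_mem (hUopen.mem_nhds hfβ)
    obtain ⟨j, hj⟩ := this.exists
    exact hαU (φ j) hj
  obtain ⟨k, hk⟩ := hexk
  exact absurd (lt_of_lt_of_le (invariant k) (measure_mono (image_subset_iff.2
    (fun α hα => hk ⟨α, hα, rfl⟩)))) (not_lt.2 hUlt.le)

lemma analyticSet_exists_measurable [IsFiniteMeasure μ] {A : Set ℝ} (hA : AnalyticSet A) :
    ∃ B, B ⊆ A ∧ MeasurableSet B ∧ μ (A \ B) = 0 ∧ μ B = μ A := by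
  -- first: a measurable subset of full outer measure
  have main : ∃ B, B ⊆ A ∧ MeasurableSet B ∧ μ B = μ A := by
    classical
    set K : ℚ → Set ℝ := fun r =>
      if h : (ENNReal.ofReal r) < μ A then Classical.choose (analyticSet_exists_isCompact_lt hA h)
      else ∅ with hK
    have hKsub : ∀ r, K r ⊆ A := by
      intro r
      simp only [hK]
      split_ifs with h
      · exact (Classical.choose_spec (analyticSet_exists_isCompact_lt hA h)).1
      · exact empty_subset _
    have hKmeas : ∀ r, MeasurableSet (K r) := by
      intro r
      simp only [hK]
      split_ifs with h
      · exact (Classical.choose_spec (analyticSet_exists_isCompact_lt hA h)).2.1.measurableSet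
      · exact MeasurableSet.empty
    have hKlt : ∀ r : ℚ, (h : (ENNReal.ofReal r) < μ A) → (ENNReal.ofReal r) < μ (K r) := by
      intro r h
      simp only [hK, dif_pos h]
      exact (Classical.choose_spec (analyticSet_exists_isCompact_lt hA h)).2.2
    refine ⟨⋃ r, K r, iUnion_subset hKsub, MeasurableSet.iUnion hKmeas, ?_⟩
    refine le_antisymm (measure_mono (iUnion_subset hKsub)) (le_of_forall_lt ?_)
    intro c hc
    obtain ⟨r, hr0, hcr, hrA⟩ := ENNReal.lt_iff_exists_rat_btwn.1 hc
    have h1 : (ENNReal.ofReal r) < μ A := hrA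
    have h2 : c < ENNReal.ofReal r := hcr
    exact lt_of_lt_of_le (lt_trans h2 (hKlt r h1)) (measure_mono (subset_iUnion K r))
  obtain ⟨B, hBA, hBm, hBμ⟩ := main
  refine ⟨B, hBA, hBm, ?_, hBμ⟩
  have h1 : A \ B ⊆ toMeasurable μ A \ B := diff_subset_diff_left (subset_toMeasurable μ A)
  refine measure_mono_null h1 ?_
  rw [measure_diff ((hBA.trans (subset_toMeasurable μ A))) hBm.nullMeasurableSet
    (measure_ne_top μ B), measure_toMeasurable, hBμ, tsub_self]

/-- Lusin's theorem for a countable family of measurable `ℝ≥0∞`-valued functions on `ℝ`. -/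
lemma lusin_family [IsFiniteMeasure μ] {g : ℕ → ℝ → ℝ≥0∞} (hg : ∀ i, Measurable (g i))
    {W : Set ℝ} (hW : MeasurableSet W) {ε : ℝ≥0∞} (hε : ε ≠ 0) :
    ∃ K, K ⊆ W ∧ IsCompact K ∧ μ (W \ K) < ε ∧ ∀ i, ContinuousOn (g i) K := by
  classical
  -- reduce to finite ε
  wlog hεtop : ε ≠ ⊤ generalizing ε
  · push_neg at hεtop
    obtain ⟨K, h1, h2, h3, h4⟩ := this (ε := 1) one_ne_zero (by norm_num)
    exact ⟨K, h1, h2, hεtop ▸ lt_of_lt_of_le h3 le_top, h4⟩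
  have hε2 : ε / 2 ≠ 0 := by
    simp only [ne_eq, ENNReal.div_eq_zero_iff]
    push_neg
    exact ⟨hε, by norm_num⟩
  -- countable basis of ℝ≥0∞, enumerated
  obtain ⟨V, hV⟩ : ∃ V : ℕ → Set ℝ≥0∞, TopologicalSpace.countableBasis ℝ≥0∞ ⊆ range V ∧
      ∀ j, V j ∈ TopologicalSpace.countableBasis ℝ≥0∞ ∨ V j = ∅ := by
    have hc : (TopologicalSpace.countableBasis ℝ≥0∞).Countable :=
      TopologicalSpace.countable_countableBasis ℝ≥0∞
    have hc2 : (insert (∅ : Set ℝ≥0∞) (TopologicalSpace.countableBasis ℝ≥0∞)).Countable :=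
      hc.insert ∅
    obtain ⟨V, hV⟩ := Set.Countable.exists_eq_range hc2 (insert_nonempty _ _)
    refine ⟨V, ?_, ?_⟩
    · intro s hs
      have : s ∈ range V := hV ▸ mem_insert_of_mem _ hs
      exact this
    · intro j
      have : V j ∈ insert (∅ : Set ℝ≥0∞) (TopologicalSpace.countableBasis ℝ≥0∞) := by
        rw [hV]; exact mem_range_self j
      rcases this with h | h
      · exact Or.inr h
      · exact Or.inl h
  -- error budget
  obtain ⟨δ, hδpos, hδsum⟩ := ENNReal.exists_pos_sum_of_countable (ε := ε / 2 / 2) (by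
    simp only [ne_eq, ENNReal.div_eq_zero_iff]
    push_neg
    exact ⟨⟨hε, by norm_num⟩, by norm_num⟩) (ℕ × ℕ)
  -- sets
  set E : ℕ × ℕ → Set ℝ := fun k => (g k.1) ⁻¹' (V k.2) with hE
  have hEmeas : ∀ k, MeasurableSet (E k) := by
    intro k
    refine (hg k.1) ?_
    rcases hV.2 k.2 with h | h
    · exact (TopologicalSpace.isOpen_of_mem_countableBasis h).measurableSet
    · rw [h]; exact MeasurableSet.empty
  -- open supersets
  have hU : ∀ k : ℕ × ℕ, ∃ U, E k ⊆ U ∧ IsOpen U ∧ μ (U \ E k) < δ k := by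
    intro k
    obtain ⟨U, hUE, hUopen, hUlt⟩ := Set.exists_isOpen_lt_of_lt (E k) (μ (E k) + δ k)
      (ENNReal.lt_add_right (measure_ne_top μ _) (ENNReal.coe_ne_zero.2 (hδpos k).ne'))
    refine ⟨U, hUE, hUopen, ?_⟩
    exact measure_diff_lt_of_lt_add (hEmeas k).nullMeasurableSet hUE (measure_ne_top μ _) hUlt
  choose U hUE hUopen hUδ using hU
  -- compact (hence closed) subsets
  have hF : ∀ k : ℕ × ℕ, ∃ F, F ⊆ E k ∧ IsCompact F ∧ μ (E k \ F) < δ k := by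
    intro k
    obtain ⟨F, hFE, hFc, hFlt⟩ := (hEmeas k).exists_isCompact_diff_lt (measure_ne_top μ _)
      (ENNReal.coe_ne_zero.2 (hδpos k).ne')
    exact ⟨F, hFE, hFc, hFlt⟩
  choose F hFE hFc hFδ using hF
  set Z : Set ℝ := ⋃ k, (U k \ F k) with hZ
  have hZopen : IsOpen Z := isOpen_iUnion fun k => (hUopen k).sdiff (hFc k).isClosed
  have hZμ : μ Z < ε / 2 := by
    calc μ Z ≤ ∑' k, μ (U k \ F k) := measure_iUnion_le _
      _ ≤ ∑' k, (δ k + δ k : ℝ≥0∞) := by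
          refine ENNReal.tsum_le_tsum fun k => ?_
          have hsplit : U k \ F k ⊆ (U k \ E k) ∪ (E k \ F k) := by
            intro x hx
            by_cases hxE : x ∈ E k
            · exact Or.inr ⟨hxE, hx.2⟩
            · exact Or.inl ⟨hx.1, hxE⟩
          calc μ (U k \ F k) ≤ μ ((U k \ E k) ∪ (E k \ F k)) := measure_mono hsplit
            _ ≤ μ (U k \ E k) + μ (E k \ F k) := measure_union_le _ _
            _ ≤ δ k + δ k := add_le_add (hUδ k).le (hFδ k).le
      _ = ∑' k, (δ k : ℝ≥0∞) + ∑' k, (δ k : ℝ≥0∞) := ENNReal.tsum_add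
      _ < ε / 2 := by
          have h4 : ε / 2 / 2 + ε / 2 / 2 = ε / 2 := ENNReal.add_halves _
          calc ∑' k, (δ k : ℝ≥0∞) + ∑' k, (δ k : ℝ≥0∞) < ε / 2 / 2 + ε / 2 / 2 :=
            ENNReal.add_lt_add hδsum hδsum
            _ = ε / 2 := h4
  -- continuity off Z
  have hcontZ : ∀ i, ContinuousOn (g i) Zᶜ := by
    intro i
    rw [continuousOn_iff_continuous_restrict]
    refine (TopologicalSpace.isBasis_countableBasis ℝ≥0∞).continuous_iff.2 ?_
    intro s hs
    obtain ⟨j, rfl⟩ := hV.1 hs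
    have hpre : (Zᶜ).restrict (g i) ⁻¹' (V j) = Subtype.val ⁻¹' (U (i, j)) := by
      ext x
      simp only [mem_preimage, restrict_apply]
      constructor
      · intro hx
        exact hUE (i, j) hx
      · intro hx
        by_contra hxE
        have hxZ : (x : ℝ) ∈ Z := mem_iUnion.2 ⟨(i, j), hx, fun hF' => hxE (hFE (i, j) hF')⟩
        exact x.2 hxZ
    rw [show (Zᶜ).domRestrict (g i) = (Zᶜ).restrict (g i) from rfl, hpre]
    exact (hUopen (i, j)).preimage continuous_subtype_val
  -- final compact set
  obtain ⟨K, hKsub, hKc, hKlt⟩ := (hW.diff hZopen.measurableSet).exists_isCompact_diff_lt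
    (measure_ne_top μ _) hε2
  refine ⟨K, fun x hx => (hKsub hx).1, hKc, ?_, fun i => (hcontZ i).mono fun x hx => (hKsub hx).2⟩
  have hWK : W \ K ⊆ (W ∩ Z) ∪ ((W \ Z) \ K) := by
    intro x hx
    by_cases hxZ : x ∈ Z
    · exact Or.inl ⟨hx.1, hxZ⟩
    · exact Or.inr ⟨⟨hx.1, hxZ⟩, hx.2⟩
  calc μ (W \ K) ≤ μ ((W ∩ Z) ∪ ((W \ Z) \ K)) := measure_mono hWK
    _ ≤ μ (W ∩ Z) + μ ((W \ Z) \ K) := measure_union_le _ _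
    _ ≤ μ Z + μ ((W \ Z) \ K) := add_le_add_left (measure_mono inter_subset_right) _
    _ < ε / 2 + ε / 2 := ENNReal.add_lt_add hZμ hKlt
    _ = ε := ENNReal.add_halves _

end Cap

section Core
variable {Y : Type*} [MetricSpace Y] [CompactSpace Y] [MeasurableSpace Y] [BorelSpace Y]

omit [MeasurableSpace Y] [BorelSpace Y] in
/-- Topological key step: if the fiber-distance functions at a dense sequence of base points are
continuous on a compact set `L` of parameters with closed nonempty fibers, then the full preimage
of `L` is compact and `q` is continuous on it. -/
lemma key_top {y : ℕ → Y} (hy : DenseRange y) {q : Y → ℝ} {L : Set ℝ} (hL : IsCompact L)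
    (hfibL : ∀ t ∈ L, IsClosed (q ⁻¹' {t}))
    (hcont : ∀ i, ContinuousOn (fun t => EMetric.infEdist (y i) (q ⁻¹' {t})) L) :
    IsCompact (q ⁻¹' L) ∧ ContinuousOn q (q ⁻¹' L) := by
  -- Main claim: limits of fiber points over `L` land in the right fiber.
  have claimA : ∀ (u : ℕ → Y) (b : Y) (t : ℝ), Tendsto u atTop (𝓝 b) →
      (∀ j, q (u j) ∈ L) → Tendsto (fun j => q (u j)) atTop (𝓝 t) → t ∈ L → q b = t := by
    intro u b t hub hqL hqt htL
    have h1 : ∀ i, EMetric.infEdist (y i) (q ⁻¹' {t}) ≤ edist (y i) b := by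
      intro i
      have htend : Tendsto (fun j => q (u j)) atTop (𝓝[L] t) := by
        rw [tendsto_nhdsWithin_iff]
        exact ⟨hqt, Eventually.of_forall hqL⟩
      have h2 : Tendsto (fun j => EMetric.infEdist (y i) (q ⁻¹' {q (u j)})) atTop
          (𝓝 (EMetric.infEdist (y i) (q ⁻¹' {t}))) := ((hcont i t htL).tendsto).comp htend
      have h3 : Tendsto (fun j => edist (y i) (u j)) atTop (𝓝 (edist (y i) b)) :=
        (tendsto_const_nhds : Tendsto (fun _ : ℕ => y i) atTop (𝓝 (y i))).edist hub
      exact le_of_tendsto_of_tendsto h2 h3 (Eventually.of_forall fun j =>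
        EMetric.infEdist_le_edist_of_mem rfl)
    have h3 : EMetric.infEdist b (q ⁻¹' {t}) = 0 := by
      by_contra hne
      have hlow : ∀ i, EMetric.infEdist b (q ⁻¹' {t}) / 2 ≤ edist b (y i) := by
        intro i
        have h4 : EMetric.infEdist b (q ⁻¹' {t}) ≤ 2 * edist b (y i) := by
          calc EMetric.infEdist b (q ⁻¹' {t})
              ≤ EMetric.infEdist (y i) (q ⁻¹' {t}) + edist b (y i) :=
                EMetric.infEdist_le_infEdist_add_edist
            _ ≤ edist (y i) b + edist b (y i) := add_le_add_left (h1 i) _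
            _ = 2 * edist b (y i) := by rw [edist_comm (y i) b, two_mul]
        rw [ENNReal.div_le_iff_le_mul (Or.inl (by norm_num)) (Or.inl (by norm_num))]
        rwa [mul_comm] at h4
      have hhalfpos : 0 < EMetric.infEdist b (q ⁻¹' {t}) / 2 :=
        ENNReal.div_pos hne (by norm_num)
      have h5 : EMetric.infEdist b (range y) = 0 :=
        EMetric.mem_closure_iff_infEdist_zero.1 (hy b)
      have h6 : EMetric.infEdist b (range y) < EMetric.infEdist b (q ⁻¹' {t}) / 2 := by
        rw [h5]; exact hhalfpos
      obtain ⟨z, hz, hzlt⟩ := EMetric.infEdist_lt_iff.1 h6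
      obtain ⟨i, rfl⟩ := hz
      exact absurd hzlt (not_lt.2 (hlow i))
    have h4 : b ∈ q ⁻¹' {t} := by
      have hcl := EMetric.mem_closure_iff_infEdist_zero.2 h3
      rwa [(hfibL t htL).closure_eq] at hcl
    exact h4
  have hclosed : IsClosed (q ⁻¹' L) := by
    refine IsSeqClosed.isClosed ?_
    intro u b hu hub
    obtain ⟨t, htL, φ, hφ, hconv⟩ := hL.tendsto_subseq (x := fun j => q (u j)) hu
    have hq' := claimA (u ∘ φ) b t (hub.comp hφ.tendsto_atTop) (fun j => hu (φ j)) hconv htL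
    simpa [mem_preimage, hq'] using htL
  refine ⟨hclosed.isCompact, ?_⟩
  rw [continuousOn_iff_continuous_restrict]
  refine SeqContinuous.continuous ?_
  intro u b hub
  refine tendsto_of_subseq_tendsto ?_
  intro ns hns
  have hval : Tendsto (fun j => ((u (ns j)) : Y)) atTop (𝓝 (b : Y)) :=
    ((continuous_subtype_val.tendsto b).comp hub).comp hns
  obtain ⟨t, htL, φ, hφ, hconv⟩ :=
    hL.tendsto_subseq (x := fun j => q ((u (ns j)) : Y)) (fun j => (u (ns j)).2)
  refine ⟨φ, ?_⟩
  have hqb := claimA (fun j => ((u (ns (φ j))) : Y)) (b : Y) t (hval.comp hφ.tendsto_atTop)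
    (fun j => (u (ns (φ j))).2) hconv htL
  show Tendsto (fun n => q ((u (ns (φ n)) : Y))) atTop (𝓝 (q (b : Y)))
  rw [hqb]
  exact hconv

variable [Nonempty Y]

lemma fiber_capture (q : Y → ℝ) (hq : Measurable q) (μ' : Measure ℝ) [IsProbabilityMeasure μ']
    (hfull' : μ' (range q) = 1) (hfib' : ∀ᵐ t ∂μ', IsCompact (q ⁻¹' {t}))
    {ε : ℝ≥0∞} (hε : ε ≠ 0) :
    ∃ L : Set ℝ, IsCompact L ∧ μ' Lᶜ < ε ∧ IsCompact (q ⁻¹' L) ∧ ContinuousOn q (q ⁻¹' L) := by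
  classical
  obtain ⟨y, hy⟩ := TopologicalSpace.exists_dense_seq Y
  -- measurable conull set of compact fibers
  set N : Set ℝ := {t | ¬ IsCompact (q ⁻¹' {t})} with hN
  have hNnull : μ' N = 0 := ae_iff.1 hfib'
  set W₀ : Set ℝ := (toMeasurable μ' N)ᶜ with hW₀
  have hW₀meas : MeasurableSet W₀ := (measurableSet_toMeasurable μ' N).compl
  have hW₀c : μ' W₀ᶜ = 0 := by rw [hW₀, compl_compl, measure_toMeasurable]; exact hNnull
  have hW₀fib : ∀ t ∈ W₀, IsCompact (q ⁻¹' {t}) := by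
    intro t ht
    by_contra h
    exact ht (subset_toMeasurable μ' N h)
  -- measurable conull subset of the range
  have hAr : AnalyticSet (range q) := by
    rw [← image_univ]; exact MeasurableSet.univ.analyticSet_image hq
  obtain ⟨Br, hBr_sub, hBr_meas, hBr_null, hBr_eq⟩ := analyticSet_exists_measurable (μ := μ') hAr
  -- analytic images of balls and Borel versions
  set S : ℕ → ℚ → Set ℝ := fun i r => q '' (EMetric.ball (y i) (ENNReal.ofReal r)) with hS
  have hSa : ∀ i (r : ℚ), AnalyticSet (S i r) := fun i r =>
    (EMetric.isOpen_ball.measurableSet).analyticSet_image hq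
  have hBex : ∀ i (r : ℚ), ∃ B, B ⊆ S i r ∧ MeasurableSet B ∧ μ' (S i r \ B) = 0 :=
    fun i r => (analyticSet_exists_measurable (hSa i r)).imp fun B h => ⟨h.1, h.2.1, h.2.2.1⟩
  choose B hBS hBmeas hBnull using hBex
  set N2 : ℕ → ℚ → Set ℝ := fun i r => toMeasurable μ' (S i r \ B i r) with hN2
  have hN2meas : ∀ i (r : ℚ), MeasurableSet (N2 i r) := fun i r => measurableSet_toMeasurable _ _
  have hN2null : ∀ i (r : ℚ), μ' (N2 i r) = 0 := fun i r => by
    rw [hN2]; rw [measure_toMeasurable]; exact hBnull i r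
  set W : Set ℝ := W₀ ∩ Br ∩ (⋃ i, ⋃ r, N2 i r)ᶜ with hW
  have hWmeas : MeasurableSet W := (hW₀meas.inter hBr_meas).inter
    (MeasurableSet.iUnion fun i => MeasurableSet.iUnion fun r => hN2meas i r).compl
  have hWc : μ' Wᶜ = 0 := by
    have hsub : Wᶜ ⊆ W₀ᶜ ∪ Brᶜ ∪ (⋃ i, ⋃ r, N2 i r) := by
      intro t ht
      rw [hW] at ht
      simp only [compl_inter, mem_union, mem_compl_iff, compl_compl] at ht ⊢
      tauto
    refine measure_mono_null hsub ?_
    refine measure_union_null (measure_union_null hW₀c ?_) ?_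
    · have h1 : μ' Brᶜ = 1 - μ' Br := prob_compl_eq_one_sub hBr_meas
      rw [h1, hBr_eq, hfull', tsub_self]
    · exact measure_iUnion_null fun i => measure_iUnion_null fun r => hN2null i r
  -- the Borel stand-ins for the fiber-distance functions
  set g : ℕ → ℝ → ℝ≥0∞ :=
    fun i t => ⨅ r : ℚ, (if 0 < r ∧ t ∈ B i r then ENNReal.ofReal r else ⊤) with hg
  have hgmeas : ∀ i, Measurable (g i) := by
    intro i
    refine Measurable.iInf fun r => Measurable.ite ?_ measurable_const measurable_const
    by_cases h0 : 0 < r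
    · have : {t : ℝ | 0 < r ∧ t ∈ B i r} = B i r := by
        ext t; simp [h0]
      rw [show {t : ℝ | 0 < r ∧ t ∈ B i r} = B i r from this]
      exact hBmeas i r
    · have : {t : ℝ | 0 < r ∧ t ∈ B i r} = ∅ := by
        ext t; simp [h0]
      rw [this]
      exact MeasurableSet.empty
  -- identification of `g` with the true fiber distances on `W`
  have hgid : ∀ t ∈ W, ∀ i, g i t = EMetric.infEdist (y i) (q ⁻¹' {t}) := by
    intro t ht i
    have htBr : t ∈ Br := ht.1.2
    have htN2 : ∀ i' (r : ℚ), t ∉ N2 i' r := fun i' r hmem =>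
      ht.2 (mem_iUnion.2 ⟨i', mem_iUnion.2 ⟨r, hmem⟩⟩)
    have hiff : ∀ r : ℚ, t ∈ B i r ↔ t ∈ S i r := by
      intro r
      constructor
      · exact fun h => hBS i r h
      · intro hSmem
        by_contra hBmem
        exact htN2 i r (subset_toMeasurable _ _ ⟨hSmem, hBmem⟩)
    refine le_antisymm ?_ ?_
    · refine le_of_forall_gt_imp_ge_of_dense fun c hc => ?_
      obtain ⟨r, hr0, hac, hcb⟩ := ENNReal.lt_iff_exists_rat_btwn.1 hc
      have hac' : EMetric.infEdist (y i) (q ⁻¹' {t}) < ENNReal.ofReal r := hac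
      have h0r : (0:ℝ≥0∞) < ENNReal.ofReal r :=
        lt_of_le_of_lt zero_le hac'
      have hrpos : 0 < r := by
        by_contra hcon
        push_neg at hcon
        rw [ENNReal.ofReal_eq_zero.2 (by exact_mod_cast hcon)] at h0r
        exact lt_irrefl _ h0r
      obtain ⟨z, hzfib, hzlt⟩ := EMetric.infEdist_lt_iff.1 hac'
      have hzS : t ∈ S i r := by
        refine ⟨z, ?_, ?_⟩
        · rw [show z ∈ EMetric.ball (y i) (ENNReal.ofReal r) ↔ edist z (y i) < ENNReal.ofReal r from Iff.rfl, edist_comm]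
          exact hzlt
        · exact hzfib
      have hzB : t ∈ B i r := (hiff r).2 hzS
      calc g i t ≤ (if 0 < r ∧ t ∈ B i r then ENNReal.ofReal r else ⊤) := iInf_le _ r
        _ = ENNReal.ofReal r := if_pos ⟨hrpos, hzB⟩
        _ ≤ c := hcb.le
    · refine le_iInf fun r => ?_
      split_ifs with h
      · obtain ⟨hrpos, hBmem⟩ := h
        obtain ⟨z, hzball, hzq⟩ := (hiff r).1 hBmem
        calc EMetric.infEdist (y i) (q ⁻¹' {t}) ≤ edist (y i) z :=
              EMetric.infEdist_le_edist_of_mem (by rw [mem_preimage, hzq]; exact rfl)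
          _ ≤ ENNReal.ofReal r := by
              rw [edist_comm]
              exact (EMetric.mem_ball.1 hzball).le
      · exact le_top
  -- Lusin
  obtain ⟨L, hLW, hLc, hLμ, hLcont⟩ := lusin_family (μ := μ') hgmeas hWmeas hε
  have hLcompl : μ' Lᶜ < ε := by
    have hsub : Lᶜ ⊆ Wᶜ ∪ (W \ L) := by
      intro t ht
      by_cases h : t ∈ W
      · exact Or.inr ⟨h, ht⟩
      · exact Or.inl h
    calc μ' Lᶜ ≤ μ' (Wᶜ ∪ (W \ L)) := measure_mono hsub
      _ ≤ μ' Wᶜ + μ' (W \ L) := measure_union_le _ _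
      _ = μ' (W \ L) := by rw [hWc, zero_add]
      _ < ε := hLμ
  have hcont : ∀ i, ContinuousOn (fun t => EMetric.infEdist (y i) (q ⁻¹' {t})) L := by
    intro i
    refine ContinuousOn.congr (hLcont i) ?_
    intro t ht
    exact (hgid t (hLW ht) i).symm
  have hfibL : ∀ t ∈ L, IsClosed (q ⁻¹' {t}) := fun t ht => (hW₀fib t (hLW ht).1.1).isClosed
  obtain ⟨hQ1, hQ2⟩ := key_top hy hLc hfibL hcont
  exact ⟨L, hLc, hLcompl, hQ1, hQ2⟩

lemma map_eq_core (q : Y → ℝ) (hq : Measurable q) (μ' : Measure ℝ) [IsProbabilityMeasure μ']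
    (hfull' : μ' (range q) = 1) (hfib' : ∀ᵐ t ∂μ', IsCompact (q ⁻¹' {t}))
    (ν : ℕ → ProbabilityMeasure Y) (hν : ∀ n, (ν n).toMeasure.map q = μ')
    (νlim : ProbabilityMeasure Y) (hlim : Tendsto ν atTop (nhds νlim)) :
    νlim.toMeasure.map q = μ' := by
  haveI : IsProbabilityMeasure (νlim.toMeasure.map q) := Measure.isProbabilityMeasure_map hq.aemeasurable
  -- key inequality
  have key : ∀ s : Set ℝ, MeasurableSet s → μ' s ≤ (νlim.toMeasure.map q) s := by
    intro s hs
    rw [Measure.map_apply hq hs]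
    have main : ∀ ε : ℝ≥0∞, ε ≠ 0 → μ' s ≤ νlim.toMeasure (q ⁻¹' s) + (ε + ε) := by
      intro ε hε
      obtain ⟨L, hLc, hLμ, hQc, hQcont⟩ := fiber_capture q hq μ' hfull' hfib' hε
      by_cases hsε : μ' s ≤ ε
      · calc μ' s ≤ ε := hsε
          _ ≤ ε + ε := le_self_add
          _ ≤ νlim.toMeasure (q ⁻¹' s) + (ε + ε) := le_add_self
      push_neg at hsε
      have hsub : μ' s - ε < μ' s :=
        ENNReal.sub_lt_self (measure_ne_top μ' s) (pos_of_gt hsε).ne' hε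
      obtain ⟨A', hA's, hA'c, hA'μ⟩ := hs.exists_lt_isCompact hsub
      -- the closed set C
      set C : Set Y := q ⁻¹' (A' ∩ L) with hC
      have hCclosed : IsClosed C := by
        have h1 : C = (q ⁻¹' L) ∩ q ⁻¹' A' := by
          rw [hC]; ext z; simp only [mem_preimage, mem_inter_iff, mem_preimage]; tauto
        rw [h1]
        exact hQcont.preimage_isClosed_of_isClosed hQc.isClosed hA'c.isClosed
      -- measure identities
      have hνn : ∀ n, (ν n).toMeasure C = μ' (A' ∩ L) := by
        intro n
        rw [hC, ← Measure.map_apply hq ((hA'c.measurableSet).inter hLc.measurableSet), hν n]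
      have hport : (atTop.limsup fun n => ((ν n : Measure Y) C)) ≤ (νlim : Measure Y) C :=
        ProbabilityMeasure.limsup_measure_closed_le_of_tendsto hlim hCclosed
      have hlimsup : (atTop.limsup fun n => ((ν n : Measure Y) C)) = μ' (A' ∩ L) := by
        have : (fun n => ((ν n : Measure Y) C)) = fun _ => μ' (A' ∩ L) := funext hνn
        rw [this, limsup_const]
      -- combine
      have h2 : μ' (A' ∩ L) ≤ νlim.toMeasure (q ⁻¹' s) := by
        refine le_trans (hlimsup ▸ hport) (measure_mono ?_)
        intro z hz
        exact hA's hz.1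
      have h3 : μ' A' ≤ μ' (A' ∩ L) + ε := by
        calc μ' A' ≤ μ' (A' ∩ L) + μ' (A' \ L) := measure_le_inter_add_diff μ' A' L
          _ ≤ μ' (A' ∩ L) + μ' Lᶜ := by
              refine add_le_add_right (measure_mono fun z hz => hz.2) _
          _ ≤ μ' (A' ∩ L) + ε := add_le_add_right hLμ.le _
      have h4 : μ' s ≤ μ' A' + ε := by
        have := hA'μ.le
        calc μ' s = μ' s - ε + ε := (tsub_add_cancel_of_le hsε.le).symm
          _ ≤ μ' A' + ε := add_le_add_left hA'μ.le _
      calc μ' s ≤ μ' A' + ε := h4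
        _ ≤ (μ' (A' ∩ L) + ε) + ε := add_le_add_left h3 _
        _ = μ' (A' ∩ L) + (ε + ε) := by ring
        _ ≤ νlim.toMeasure (q ⁻¹' s) + (ε + ε) := add_le_add_left h2 _
    -- let ε → 0
    refine le_of_forall_lt fun c hc => ?_
    by_contra hcon
    push_neg at hcon
    have hlt : νlim.toMeasure (q ⁻¹' s) < μ' s := lt_of_le_of_lt hcon hc
    obtain ⟨d, hd1, hd2⟩ := exists_between hlt
    have hd3 : μ' s - d ≠ 0 := by
      simp only [ne_eq, tsub_eq_zero_iff_le, not_le]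
      exact hd2
    have hhalf : (μ' s - d) / 2 ≠ 0 := by
      simp only [ne_eq, ENNReal.div_eq_zero_iff]
      push_neg
      exact ⟨hd3, by norm_num⟩
    have h7 := main ((μ' s - d) / 2) hhalf
    rw [ENNReal.add_halves] at h7
    have hfin : μ' s - d ≠ ⊤ := (tsub_le_self.trans_lt (measure_lt_top μ' s)).ne
    have h10 : νlim.toMeasure (q ⁻¹' s) + (μ' s - d) < μ' s := by
      calc νlim.toMeasure (q ⁻¹' s) + (μ' s - d) < d + (μ' s - d) :=
            ENNReal.add_lt_add_right hfin hd1
        _ = μ' s := by rw [add_comm]; exact tsub_add_cancel_of_le hd2.le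
    exact absurd (h7.trans_lt h10) (lt_irrefl _)
  -- from `key` to equality
  refine Measure.ext fun s hs => ?_
  refine le_antisymm ?_ (key s hs)
  have h1 := key sᶜ hs.compl
  have h2 : (νlim.toMeasure.map q) s + μ' sᶜ ≤ (νlim.toMeasure.map q) s + (νlim.toMeasure.map q) sᶜ :=
    add_le_add_right h1 _
  rw [measure_add_measure_compl hs, measure_univ] at h2
  have h3 : μ' s + μ' sᶜ = 1 := by rw [measure_add_measure_compl hs, measure_univ]
  have h4 : (νlim.toMeasure.map q) s + μ' sᶜ ≤ μ' s + μ' sᶜ := by rw [h3]; exact h2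
  exact ENNReal.add_le_add_iff_right (measure_ne_top μ' sᶜ) |>.1 h4

end Core

/-- Closedness part of Lemma 3.1 (compact case): if `Y` is compact metrizable, `X` a standard
Borel space with Borel probability measure `μ`, `p : Y → X` Borel with `μ (range p) = 1` and
`μ`-a.e. compact fibers, and `ν n` is a sequence of Borel probability measures on `Y` with
`p_* (ν n) = μ` converging weakly (in the weak* topology on `P(Y)`) to `νlim`, then
`p_* νlim = μ`. -/
theorem map_limit_eq_of_map_eq
    {X : Type*} [MeasurableSpace X] [StandardBorelSpace X]
    (μ : Measure X) [IsProbabilityMeasure μ]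
    {Y : Type*} [TopologicalSpace Y] [CompactSpace Y] [TopologicalSpace.MetrizableSpace Y]
    [MeasurableSpace Y] [BorelSpace Y]
    (p : Y → X) (hp : Measurable p)
    (hfull : μ (Set.range p) = 1)
    (hfib : ∀ᵐ x ∂μ, IsCompact (p ⁻¹' {x}))
    (ν : ℕ → ProbabilityMeasure Y) (hν : ∀ n, (ν n).toMeasure.map p = μ)
    (νlim : ProbabilityMeasure Y) (hlim : Tendsto ν atTop (nhds νlim)) :
    νlim.toMeasure.map p = μ := by
  letI : MetricSpace Y := TopologicalSpace.metrizableSpaceMetric Y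
  have hYne : Nonempty Y := by
    by_contra h
    rw [not_nonempty_iff] at h
    have h1 : ((ν 0) : Measure Y) univ = 1 := measure_univ
    rw [show (univ : Set Y) = ∅ from eq_empty_of_isEmpty _, measure_empty] at h1
    exact zero_ne_one h1
  -- embed X into ℝ
  obtain ⟨f, hf⟩ := exists_measurableEmbedding_real X
  set q : Y → ℝ := f ∘ p with hq_def
  have hq : Measurable q := hf.measurable.comp hp
  set μ' : Measure ℝ := μ.map f with hμ'_def
  haveI : IsProbabilityMeasure μ' := Measure.isProbabilityMeasure_map hf.measurable.aemeasurable
  have hfull' : μ' (range q) = 1 := by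
    refine le_antisymm prob_le_one ?_
    have h1 : range p ⊆ f ⁻¹' (range q) := by
      intro x hx
      rcases hx with ⟨y, rfl⟩
      exact ⟨y, rfl⟩
    calc (1 : ℝ≥0∞) = μ (range p) := hfull.symm
      _ ≤ μ (f ⁻¹' (range q)) := measure_mono h1
      _ ≤ μ' (range q) := Measure.le_map_apply hf.measurable.aemeasurable _
  have hfib' : ∀ᵐ t ∂μ', IsCompact (q ⁻¹' {t}) := by
    rw [ae_iff] at hfib ⊢
    set N := {x | ¬ IsCompact (p ⁻¹' {x})} with hN
    have hsub : {t | ¬ IsCompact (q ⁻¹' {t})} ⊆ f '' (toMeasurable μ N) := by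
      intro t ht
      simp only [mem_setOf_eq] at ht
      by_cases hr : t ∈ range f
      · rcases hr with ⟨x, rfl⟩
        have hfiber : q ⁻¹' {f x} = p ⁻¹' {x} := by
          ext y
          simp only [mem_preimage, mem_singleton_iff, hq_def, Function.comp_apply]
          exact ⟨fun h => hf.injective h, fun h => by rw [h]⟩
        rw [hfiber] at ht
        exact ⟨x, subset_toMeasurable μ N ht, rfl⟩
      · exfalso
        have : q ⁻¹' {t} = ∅ := by
          ext y
          simp only [mem_preimage, mem_singleton_iff, mem_empty_iff_false, iff_false]
          intro h
          exact hr ⟨p y, h⟩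
        rw [this] at ht
        exact ht isCompact_empty
    refine measure_mono_null hsub ?_
    rw [hμ'_def, Measure.map_apply hf.measurable
      (hf.measurableSet_image' (measurableSet_toMeasurable μ N)),
      hf.injective.preimage_image, measure_toMeasurable]
    exact hfib
  have hν' : ∀ n, (ν n).toMeasure.map q = μ' := by
    intro n
    rw [hq_def, ← Measure.map_map hf.measurable hp, hν n, hμ'_def]
  have hmain : νlim.toMeasure.map q = μ' := map_eq_core q hq μ' hfull' hfib' ν hν' νlim hlim
  -- deduce the statement
  rw [hq_def, ← Measure.map_map hf.measurable hp, hμ'_def] at hmain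
  ext s hs
  have h1 : (νlim.toMeasure.map p).map f (f '' s) = (μ.map f) (f '' s) := by rw [hmain]
  rw [Measure.map_apply hf.measurable (hf.measurableSet_image' hs),
    Measure.map_apply hf.measurable (hf.measurableSet_image' hs),
    hf.injective.preimage_image] at h1
  exact h1
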